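/- Let (φ_α)_{α>0} be a family of functions φ_α : (0,∞) × ℝ → ℝ such that for all α, κ > 0 the function φ_α(κ,·) is monotonically increasing, nonexpansive (1-Lipschitz) and satisfies φ_α(κ,0) = 0. Suppose in addition that for every κ > 0 and every y ∈ ℝ the set {(z − y)/α : z ∈ ℝ, φ_α(κ, z) = y} is the same for all α > 0. Then for every κ > 0 there exists a proper, convex, lower semicontinuous function s_κ : ℝ → [0,∞] with s_κ(0) = 0 such that φ_α(κ,·) = prox_{α·s_κ} for all α > 0. -/

import Mathlib

open scoped ENNReal
open Filter

noncomputable section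

/-- `p` is the (unique) proximal point at `x` of the `[0,∞]`-valued functional `s`. -/
def IsProxPtE (s : ℝ → ℝ≥0∞) (x p : ℝ) : Prop :=
  (∀ y : ℝ, ENNReal.ofReal ((x - p) ^ 2 / 2) + s p ≤ ENNReal.ofReal ((x - y) ^ 2 / 2) + s y) ∧
  ∀ q : ℝ, (∀ y : ℝ, ENNReal.ofReal ((x - q) ^ 2 / 2) + s q ≤
    ENNReal.ofReal ((x - y) ^ 2 / 2) + s y) → q = p

/-- Convexity for `[0,∞]`-valued functions on `ℝ`. -/
def ENNConvexOn (s : ℝ → ℝ≥0∞) : Prop :=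
  ∀ x y : ℝ, ∀ a b : ℝ, 0 ≤ a → 0 ≤ b → a + b = 1 →
    s (a * x + b * y) ≤ ENNReal.ofReal a * s x + ENNReal.ofReal b * s y

open intervalIntegral

namespace St19Aux

/-- Potential of `f`: `ψ(x) = ∫_0^x f`. -/
def psi (f : ℝ → ℝ) (x : ℝ) : ℝ := ∫ t in (0:ℝ)..x, f t

section
variable {f : ℝ → ℝ} (hl : ∀ u v : ℝ, |f u - f v| ≤ |u - v|)
include hl

lemma lip : LipschitzWith 1 f :=
  LipschitzWith.of_dist_le_mul fun u v => by
    simpa [Real.dist_eq] using hl u v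

lemma intble (a b : ℝ) : IntervalIntegrable f MeasureTheory.volume a b :=
  (lip hl).continuous.intervalIntegrable a b

lemma psi_sub (x x' : ℝ) : psi f x' - psi f x = ∫ t in x..x', f t := by
  have h := integral_add_adjacent_intervals (intble hl 0 x) (intble hl x x')
  simp only [psi]; linarith

omit hl in
lemma aux_int (a b c : ℝ) : (∫ t in a..b, (c + t)) = c * (b - a) + (b^2 - a^2)/2 := by
  rw [integral_add (intervalIntegrable_const) intervalIntegral.intervalIntegrable_id,
    integral_const, integral_id]
  simp [smul_eq_mul]; ring

/-- Smoothness upper bound. -/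
lemma lemA (x x' : ℝ) : psi f x' - psi f x ≤ f x * (x' - x) + (x' - x)^2 / 2 := by
  rw [psi_sub hl]
  rcases le_total x x' with h | h
  · have hle : (∫ t in x..x', f t) ≤ ∫ t in x..x', ((f x - x) + t) := by
      apply integral_mono_on h (intble hl x x')
        (intervalIntegrable_const.add intervalIntegral.intervalIntegrable_id)
      intro t ht
      have h1 : f t - f x ≤ |t - x| := (le_abs_self _).trans (hl t x)
      rw [abs_of_nonneg (by linarith [ht.1])] at h1
      linarith
    rw [aux_int] at hle; nlinarith
  · rw [integral_symm]
    have hle : (∫ t in x'..x, ((f x - x) + t)) ≤ ∫ t in x'..x, f t := by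
      apply integral_mono_on h
        (intervalIntegrable_const.add intervalIntegral.intervalIntegrable_id) (intble hl x' x)
      intro t ht
      have h1 : f x - f t ≤ |x - t| := (le_abs_self _).trans (hl x t)
      rw [abs_of_nonneg (by linarith [ht.2])] at h1
      linarith
    rw [aux_int] at hle; nlinarith

/-- Convexity lower bound (gradient inequality). -/
lemma lemB (hm : Monotone f) (x x' : ℝ) :
    f x * (x' - x) ≤ psi f x' - psi f x := by
  rw [psi_sub hl]
  rcases le_total x x' with h | h
  · have hle : (∫ t in x..x', (f x : ℝ)) ≤ ∫ t in x..x', f t := by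
      apply integral_mono_on h intervalIntegrable_const (intble hl x x')
      intro t ht; exact hm ht.1
    rw [integral_const, smul_eq_mul] at hle; nlinarith
  · rw [integral_symm]
    have hle : (∫ t in x'..x, f t) ≤ ∫ t in x'..x, (f x : ℝ) := by
      apply integral_mono_on h (intble hl x' x) intervalIntegrable_const
      intro t ht; exact hm ht.2
    rw [integral_const, smul_eq_mul] at hle; nlinarith

end

/-- The candidate functional: `s(y) = ψ*(y) − y²/2`, in `[0,∞]`. -/
def Sfun (f : ℝ → ℝ) (y : ℝ) : ℝ≥0∞ :=
  ⨆ x : ℝ, ENNReal.ofReal (x * y - y ^ 2 / 2 - psi f x)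

section
variable {f : ℝ → ℝ} (hl : ∀ u v : ℝ, |f u - f v| ≤ |u - v|)
include hl

omit hl in
lemma Sfun_lsc : LowerSemicontinuous (Sfun f) := by
  apply lowerSemicontinuous_iSup
  intro x
  exact (ENNReal.continuous_ofReal.comp (by continuity)).lowerSemicontinuous

lemma Sfun_zero (hm : Monotone f) (h0 : f 0 = 0) : Sfun f 0 = 0 := by
  refine le_antisymm (iSup_le fun x => ?_) zero_le
  have hpsi : (0:ℝ) ≤ psi f x := by
    have := lemB hl hm 0 x
    simp [psi, h0] at this ⊢
    linarith
  simp only [nonpos_iff_eq_zero, ENNReal.ofReal_eq_zero]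
  nlinarith

lemma Sfun_convex : ENNConvexOn (Sfun f) := by
  intro x y a b ha hb hab
  refine iSup_le fun w => ?_
  set c := f w with hc
  have hU1 : w * x - x ^ 2 / 2 - psi f w + (x - c) ^ 2 / 2 ≤
      (w + x - c) * x - x ^ 2 / 2 - psi f (w + x - c) := by
    have := lemA hl w (w + x - c); nlinarith
  have hU2 : w * y - y ^ 2 / 2 - psi f w + (y - c) ^ 2 / 2 ≤
      (w + y - c) * y - y ^ 2 / 2 - psi f (w + y - c) := by
    have := lemA hl w (w + y - c); nlinarith
  have hkey : w * (a * x + b * y) - (a * x + b * y) ^ 2 / 2 - psi f w ≤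
      a * (w * x - x ^ 2 / 2 - psi f w + (x - c) ^ 2 / 2) +
      b * (w * y - y ^ 2 / 2 - psi f w + (y - c) ^ 2 / 2) := by
    have hb' : b = 1 - a := by linarith
    subst hb'
    nlinarith [sq_nonneg (a * (x - c) + (1 - a) * (y - c))]
  calc ENNReal.ofReal (w * (a * x + b * y) - (a * x + b * y) ^ 2 / 2 - psi f w)
      ≤ ENNReal.ofReal (a * (w * x - x ^ 2 / 2 - psi f w + (x - c) ^ 2 / 2) +
        b * (w * y - y ^ 2 / 2 - psi f w + (y - c) ^ 2 / 2)) := ENNReal.ofReal_le_ofReal hkey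
    _ ≤ ENNReal.ofReal (a * (w * x - x ^ 2 / 2 - psi f w + (x - c) ^ 2 / 2)) +
        ENNReal.ofReal (b * (w * y - y ^ 2 / 2 - psi f w + (y - c) ^ 2 / 2)) :=
        ENNReal.ofReal_add_le
    _ = ENNReal.ofReal a * ENNReal.ofReal (w * x - x ^ 2 / 2 - psi f w + (x - c) ^ 2 / 2) +
        ENNReal.ofReal b * ENNReal.ofReal (w * y - y ^ 2 / 2 - psi f w + (y - c) ^ 2 / 2) := by
        rw [ENNReal.ofReal_mul ha, ENNReal.ofReal_mul hb]
    _ ≤ ENNReal.ofReal a * Sfun f x + ENNReal.ofReal b * Sfun f y := by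
        gcongr
        · rw [Sfun]
          exact (ENNReal.ofReal_le_ofReal hU1).trans (le_iSup (fun x' => ENNReal.ofReal (x' * x - x ^ 2 / 2 - psi f x')) (w + x - c))
        · rw [Sfun]
          exact (ENNReal.ofReal_le_ofReal hU2).trans (le_iSup (fun x' => ENNReal.ofReal (x' * y - y ^ 2 / 2 - psi f x')) (w + y - c))

/-- Fenchel equality: the value of `Sfun` at a point of the range of `f`. -/
lemma Sfun_at (hm : Monotone f) (z : ℝ) :
    Sfun f (f z) = ENNReal.ofReal (z * f z - psi f z - (f z) ^ 2 / 2) := by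
  rw [Sfun]
  refine le_antisymm (iSup_le fun x => ENNReal.ofReal_le_ofReal ?_) ?_
  · have := lemB hl hm z x; nlinarith
  · have : z * f z - psi f z - (f z) ^ 2 / 2 = z * f z - (f z) ^ 2 / 2 - psi f z := by ring
    rw [this]
    exact le_iSup (fun x => ENNReal.ofReal (x * f z - (f z) ^ 2 / 2 - psi f x)) z

lemma sp_nonneg (hm : Monotone f) (h0 : f 0 = 0) (z : ℝ) :
    0 ≤ z * f z - psi f z - (f z) ^ 2 / 2 := by
  have h1 := lemB hl hm z (f z)
  have h2 := lemA hl 0 (f z)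
  have h3 : psi f 0 = 0 := by simp [psi]
  rw [h3, h0] at h2
  nlinarith

omit hl in
lemma ofReal_ineq {a A B C D : ℝ} (ha : 0 ≤ a) (hA : 0 ≤ A) (hB : 0 ≤ B) (hC : 0 ≤ C)
    (hD : 0 ≤ D)
    (h : ENNReal.ofReal A + ENNReal.ofReal a * ENNReal.ofReal B ≤
         ENNReal.ofReal C + ENNReal.ofReal a * ENNReal.ofReal D) : A + a * B ≤ C + a * D := by
  rw [← ENNReal.ofReal_mul ha, ← ENNReal.ofReal_mul ha,
    ← ENNReal.ofReal_add hA (mul_nonneg ha hB), ← ENNReal.ofReal_add hC (mul_nonneg ha hD),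
    ENNReal.ofReal_le_ofReal_iff (by positivity)] at h
  exact h

end
end St19Aux

/-- If each `φ_α(κ,·)` is monotone, nonexpansive with `φ_α(κ,0) = 0`, and
the sets `{(z − y)/α : φ_α(κ,z) = y}` do not depend on `α > 0`, then for each `κ > 0` there
is a proper convex lsc `s_κ : ℝ → [0,∞]` with `s_κ(0) = 0` and `φ_α(κ,·) = prox_{α·s_κ}`
for all `α > 0`. -/
theorem statement19 (φ : ℝ → ℝ → ℝ → ℝ)
    (hmono : ∀ α > (0 : ℝ), ∀ κ > (0 : ℝ), Monotone (φ α κ))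
    (hnonexp : ∀ α > (0 : ℝ), ∀ κ > (0 : ℝ), ∀ x y : ℝ, |φ α κ x - φ α κ y| ≤ |x - y|)
    (hzero : ∀ α > (0 : ℝ), ∀ κ > (0 : ℝ), φ α κ 0 = 0)
    (hstat : ∀ κ > (0 : ℝ), ∀ y : ℝ, ∀ α β : ℝ, 0 < α → 0 < β →
      {w : ℝ | ∃ z : ℝ, φ α κ z = y ∧ w = (z - y) / α} =
      {w : ℝ | ∃ z : ℝ, φ β κ z = y ∧ w = (z - y) / β}) :
    ∀ κ > (0 : ℝ), ∃ s : ℝ → ℝ≥0∞, (∃ x, s x ≠ ⊤) ∧ ENNConvexOn s ∧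
      LowerSemicontinuous s ∧ s 0 = 0 ∧
      ∀ α > (0 : ℝ), ∀ x : ℝ, IsProxPtE (fun y => ENNReal.ofReal α * s y) x (φ α κ x) := by
  intro κ hκ
  set f : ℝ → ℝ := φ 1 κ with hf
  have hm : Monotone f := hmono 1 one_pos κ hκ
  have hl : ∀ u v : ℝ, |f u - f v| ≤ |u - v| := hnonexp 1 one_pos κ hκ
  have h0 : f 0 = 0 := hzero 1 one_pos κ hκ
  refine ⟨St19Aux.Sfun f, ⟨0, ?_⟩, St19Aux.Sfun_convex hl, St19Aux.Sfun_lsc,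
    St19Aux.Sfun_zero hl hm h0, ?_⟩
  · rw [St19Aux.Sfun_zero hl hm h0]; exact ENNReal.zero_ne_top
  intro α hα x
  set p : ℝ := φ α κ x with hp
  -- obtain the representative `z` with `f z = p` and `x - p = α * (z - p)`
  have hmem : (x - p) / α ∈ {w : ℝ | ∃ z : ℝ, φ α κ z = p ∧ w = (z - p) / α} :=
    ⟨x, rfl, rfl⟩
  rw [hstat κ hκ p α 1 hα one_pos] at hmem
  obtain ⟨z, hz, hw⟩ := hmem
  have hz' : f z = p := hz
  have hxz : x - p = α * (z - p) := by
    rw [div_one] at hw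
    field_simp at hw
    linarith
  have hsp0 : 0 ≤ z * p - St19Aux.psi f z - p ^ 2 / 2 := by
    have := St19Aux.sp_nonneg hl hm h0 z
    rw [hz'] at this; exact this
  set sp : ℝ := z * p - St19Aux.psi f z - p ^ 2 / 2 with hsp
  have hSp : St19Aux.Sfun f p = ENNReal.ofReal sp := by
    have := St19Aux.Sfun_at hl hm z
    rw [hz'] at this; exact this
  -- part 1 : the minimization property
  have hp1 : ∀ y : ℝ, ENNReal.ofReal ((x - p) ^ 2 / 2) + ENNReal.ofReal α * St19Aux.Sfun f p ≤
      ENNReal.ofReal ((x - y) ^ 2 / 2) + ENNReal.ofReal α * St19Aux.Sfun f y := by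
    intro y
    have hA : St19Aux.psi f (z + y - p) - St19Aux.psi f z ≤ p * (y - p) + (y - p) ^ 2 / 2 := by
      have := St19Aux.lemA hl z (z + y - p)
      rw [hz'] at this
      calc St19Aux.psi f (z + y - p) - St19Aux.psi f z
          ≤ p * (z + y - p - z) + (z + y - p - z) ^ 2 / 2 := this
        _ = p * (y - p) + (y - p) ^ 2 / 2 := by ring
    have hA' := mul_le_mul_of_nonneg_left hA hα.le
    have hreal : (x - p) ^ 2 / 2 + α * sp ≤
        (x - y) ^ 2 / 2 + α * ((z + y - p) * y - y ^ 2 / 2 - St19Aux.psi f (z + y - p)) := by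
      have e1 : (x - p) ^ 2 = (α * (z - p)) ^ 2 := by rw [hxz]
      have e2 : (x - y) ^ 2 = (α * (z - p) + (p - y)) ^ 2 := by
        rw [show x - y = (x - p) + (p - y) by ring, hxz]
      rw [hsp, e1, e2]
      nlinarith [hA', sq_nonneg (p - y)]
    calc ENNReal.ofReal ((x - p) ^ 2 / 2) + ENNReal.ofReal α * St19Aux.Sfun f p
        = ENNReal.ofReal ((x - p) ^ 2 / 2 + α * sp) := by
          rw [hSp, ← ENNReal.ofReal_mul hα.le,
            ← ENNReal.ofReal_add (by positivity) (mul_nonneg hα.le hsp0)]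
      _ ≤ ENNReal.ofReal ((x - y) ^ 2 / 2 +
            α * ((z + y - p) * y - y ^ 2 / 2 - St19Aux.psi f (z + y - p))) :=
          ENNReal.ofReal_le_ofReal hreal
      _ ≤ ENNReal.ofReal ((x - y) ^ 2 / 2) +
            ENNReal.ofReal (α * ((z + y - p) * y - y ^ 2 / 2 - St19Aux.psi f (z + y - p))) :=
          ENNReal.ofReal_add_le
      _ = ENNReal.ofReal ((x - y) ^ 2 / 2) + ENNReal.ofReal α *
            ENNReal.ofReal ((z + y - p) * y - y ^ 2 / 2 - St19Aux.psi f (z + y - p)) := by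
          rw [ENNReal.ofReal_mul hα.le]
      _ ≤ ENNReal.ofReal ((x - y) ^ 2 / 2) + ENNReal.ofReal α * St19Aux.Sfun f y := by
          gcongr
          rw [St19Aux.Sfun]
          exact le_iSup (fun x' => ENNReal.ofReal (x' * y - y ^ 2 / 2 - St19Aux.psi f x')) (z + y - p)
  refine ⟨hp1, ?_⟩
  -- part 2 : uniqueness
  intro q hq
  have hαne : (ENNReal.ofReal α) ≠ 0 := (ENNReal.ofReal_pos.2 hα).ne'
  have hfinq : St19Aux.Sfun f q ≠ ⊤ := by
    intro htop
    have h := hq p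
    simp only at h
    rw [htop, hSp, ENNReal.mul_top hαne] at h
    simp only [add_top, top_le_iff] at h
    exact (ENNReal.add_ne_top.2 ⟨ENNReal.ofReal_ne_top,
      ENNReal.mul_ne_top ENNReal.ofReal_ne_top ENNReal.ofReal_ne_top⟩) h
  set sq' : ℝ := (St19Aux.Sfun f q).toReal with hsq'
  have hSq : St19Aux.Sfun f q = ENNReal.ofReal sq' := (ENNReal.ofReal_toReal hfinq).symm
  have hsq0 : 0 ≤ sq' := ENNReal.toReal_nonneg
  -- midpoint
  have hconv := St19Aux.Sfun_convex hl p q (1/2) (1/2) (by norm_num) (by norm_num) (by norm_num)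
  rw [hSp, hSq, ← ENNReal.ofReal_mul (by norm_num), ← ENNReal.ofReal_mul (by norm_num),
    ← ENNReal.ofReal_add (by positivity) (by positivity)] at hconv
  have hfinm : St19Aux.Sfun f (1/2 * p + 1/2 * q) ≠ ⊤ :=
    ne_top_of_le_ne_top ENNReal.ofReal_ne_top hconv
  set sm : ℝ := (St19Aux.Sfun f (1/2 * p + 1/2 * q)).toReal with hsmdef
  have hSm : St19Aux.Sfun f (1/2 * p + 1/2 * q) = ENNReal.ofReal sm :=
    (ENNReal.ofReal_toReal hfinm).symm
  have hsm0 : 0 ≤ sm := ENNReal.toReal_nonneg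
  have hsmle : sm ≤ 1/2 * sp + 1/2 * sq' :=
    ENNReal.toReal_le_of_le_ofReal (by positivity) hconv
  -- convert the three ENNReal inequalities to real ones
  have h1 : (x - q) ^ 2 / 2 + α * sq' ≤ (x - p) ^ 2 / 2 + α * sp := by
    have h := hq p
    simp only at h
    rw [hSp, hSq] at h
    exact St19Aux.ofReal_ineq hα.le (by positivity) hsq0 (by positivity) hsp0 h
  have h2 : (x - p) ^ 2 / 2 + α * sp ≤ (x - q) ^ 2 / 2 + α * sq' := by
    have h := hp1 q
    rw [hSp, hSq] at h
    exact St19Aux.ofReal_ineq hα.le (by positivity) hsp0 (by positivity) hsq0 h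
  have h3 : (x - p) ^ 2 / 2 + α * sp ≤ (x - (1/2 * p + 1/2 * q)) ^ 2 / 2 + α * sm := by
    have h := hp1 (1/2 * p + 1/2 * q)
    rw [hSp, hSm] at h
    exact St19Aux.ofReal_ineq hα.le (by positivity) hsp0 (by positivity) hsm0 h
  have hsq : (q - p) ^ 2 ≤ 0 := by
    nlinarith [mul_le_mul_of_nonneg_left hsmle hα.le]
  have : q - p = 0 := by
    have := sq_nonneg (q - p)
    have h4 : (q - p) ^ 2 = 0 := le_antisymm hsq (sq_nonneg _)
    exact (pow_eq_zero_iff two_ne_zero).mp h4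
  linarith
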